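/- Let A be a nonnegative n×n real matrix with support and let ζ = (p,q) ∈ ℝ^n × ℝ^n be entrywise positive. Let A' = diag(ζ) Ã diag(ζ) (the symmetric (2n)×(2n) embedding of the scaled matrix diag(p) A diag(q)), let C' = diag(A' 1_{2n}), and let b = (A' − I_{2n}) 1_{2n}. Suppose b ≠ 0 and w ∈ ℝ^{2n} solves (C' + A') w = b. Then ⟨b, w⟩ > 0, and the directional derivative of g at ζ in the direction u = −ζ ⊙ w equals (d/dα) g(ζ + α u)|_{α=0} = −⟨b, w⟩ < 0; in particular u is a strict descent direction for g. -/

import Mathlib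

open Finset Matrix

/-- for a nonnegative matrix `A` with support and a positive scaling
vector `ζ = (p,q)`, let `A' = diag(ζ) Ã diag(ζ)`, `C' = diag(A' 1)` and
`b = (A' − I) 1`.  If `b ≠ 0` and `(C' + A') w = b`, then `⟨b, w⟩ > 0` and the
directional derivative of the log-barrier objective `g` at `ζ` in the direction
`u = −ζ ⊙ w` equals `−⟨b, w⟩ < 0`, so `u` is a strict descent direction. -/
theorem stmt10 (n : ℕ) (A : Matrix (Fin n) (Fin n) ℝ) (hA : ∀ i j, 0 ≤ A i j)
    (hsupp : ∃ σ : Equiv.Perm (Fin n), ∀ i, 0 < A i (σ i))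
    (p q : Fin n → ℝ) (hp : ∀ i, 0 < p i) (hq : ∀ j, 0 < q j)
    (ζ : Fin n ⊕ Fin n → ℝ) (hζ : ζ = Sum.elim p q)
    (Atil : Matrix (Fin n ⊕ Fin n) (Fin n ⊕ Fin n) ℝ)
    (hAtil : Atil = Matrix.fromBlocks 0 A Aᵀ 0)
    (A' : Matrix (Fin n ⊕ Fin n) (Fin n ⊕ Fin n) ℝ)
    (hA' : ∀ a b, A' a b = ζ a * Atil a b * ζ b)
    (C' : Matrix (Fin n ⊕ Fin n) (Fin n ⊕ Fin n) ℝ)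
    (hC' : C' = Matrix.diagonal (A' *ᵥ fun _ => (1 : ℝ)))
    (b : Fin n ⊕ Fin n → ℝ) (hb : b = (A' - 1) *ᵥ fun _ => (1 : ℝ))
    (hbne : b ≠ 0)
    (w : Fin n ⊕ Fin n → ℝ) (hw : (C' + A') *ᵥ w = b)
    (u : Fin n ⊕ Fin n → ℝ) (hu : ∀ a, u a = -(ζ a * w a)) :
    0 < b ⬝ᵥ w ∧
      HasDerivAt
        (fun α : ℝ =>
          (∑ i, ∑ j, A i j * (ζ + α • u) (Sum.inl i) * (ζ + α • u) (Sum.inr j))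
            - ∑ a, Real.log ((ζ + α • u) a))
        (-(b ⬝ᵥ w)) 0 := by
  have hζpos : ∀ a, 0 < ζ a := by
    intro a; cases a with
    | inl i => simpa [hζ] using hp i
    | inr j => simpa [hζ] using hq j
  have hAtnn : ∀ a c, 0 ≤ Atil a c := by
    intro a c
    cases a <;> cases c <;> simp [hAtil, hA _ _]
  have hA'nn : ∀ a c, 0 ≤ A' a c := by
    intro a c
    rw [hA' a c]
    have h1 := (hζpos a).le
    have h2 := (hζpos c).le
    have h3 := hAtnn a c
    positivity
  have hA'symm : ∀ a c, A' a c = A' c a := by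
    intro a c
    rw [hA' a c, hA' c a]
    have : Atil a c = Atil c a := by
      cases a <;> cases c <;> simp [hAtil]
    rw [this]; ring
  -- b a = ∑ c, A' a c * (w a + w c)
  have hba : ∀ a, b a = ∑ c, A' a c * (w a + w c) := by
    intro a
    have := congrFun hw a
    rw [← this]
    simp only [Matrix.mulVec, dotProduct, Matrix.add_apply, hC',
      Matrix.diagonal_apply]
    simp only [add_mul, Finset.sum_add_distrib, ite_mul, zero_mul,
      Finset.sum_ite_eq, Finset.mem_univ, if_true, mul_one, mul_add]
    congr 1
    rw [Finset.sum_mul]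
  -- quadratic form identity
  have hQ2 : 2 * (b ⬝ᵥ w) = ∑ a, ∑ c, A' a c * (w a + w c) ^ 2 := by
    have h1 : b ⬝ᵥ w = ∑ a, ∑ c, A' a c * (w a + w c) * w a := by
      simp only [dotProduct]
      refine Finset.sum_congr rfl fun a _ => ?_
      rw [hba a, Finset.sum_mul]
    have h2 : b ⬝ᵥ w = ∑ a, ∑ c, A' a c * (w a + w c) * w c := by
      rw [h1, Finset.sum_comm]
      refine Finset.sum_congr rfl fun a _ => Finset.sum_congr rfl fun c _ => ?_
      rw [hA'symm a c]; ring
    calc 2 * (b ⬝ᵥ w)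
        = (∑ a, ∑ c, A' a c * (w a + w c) * w a)
            + (∑ a, ∑ c, A' a c * (w a + w c) * w c) := by rw [← h1, ← h2]; ring
      _ = _ := by
          rw [← Finset.sum_add_distrib]
          refine Finset.sum_congr rfl fun a _ => ?_
          rw [← Finset.sum_add_distrib]
          exact Finset.sum_congr rfl fun c _ => by ring
  have hSnn : 0 ≤ ∑ a, ∑ c, A' a c * (w a + w c) ^ 2 :=
    Finset.sum_nonneg fun a _ => Finset.sum_nonneg fun c _ =>
      mul_nonneg (hA'nn a c) (sq_nonneg _)
  have hQnn : 0 ≤ b ⬝ᵥ w := by linarith [hQ2 ▸ hSnn]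
  have hQne : b ⬝ᵥ w ≠ 0 := by
    intro h0
    have hS : ∑ a, ∑ c, A' a c * (w a + w c) ^ 2 = 0 := by rw [← hQ2, h0]; ring
    have hterm : ∀ a c, A' a c * (w a + w c) ^ 2 = 0 := by
      intro a c
      have houter := (Finset.sum_eq_zero_iff_of_nonneg
        (fun a _ => Finset.sum_nonneg fun c _ =>
          mul_nonneg (hA'nn a c) (sq_nonneg (w a + w c)))).mp hS a (Finset.mem_univ a)
      exact (Finset.sum_eq_zero_iff_of_nonneg
        (fun c _ => mul_nonneg (hA'nn a c) (sq_nonneg (w a + w c)))).mp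
          houter c (Finset.mem_univ c)
    apply hbne
    funext a
    simp only [Pi.zero_apply]
    rw [hba a]
    refine Finset.sum_eq_zero fun c _ => ?_
    rcases mul_eq_zero.mp (hterm a c) with h | h
    · rw [h, zero_mul]
    · rw [pow_eq_zero_iff two_ne_zero |>.mp h, mul_zero]
  have hQpos : 0 < b ⬝ᵥ w := lt_of_le_of_ne hQnn (Ne.symm hQne)
  refine ⟨hQpos, ?_⟩
  -- derivative part
  have haff : ∀ a : Fin n ⊕ Fin n, HasDerivAt (fun α : ℝ => ζ a + α * u a) (u a) 0 := by
    intro a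
    simpa using (((hasDerivAt_id (0:ℝ)).mul_const (u a)).const_add (ζ a))
  have hterm : ∀ i j : Fin n,
      HasDerivAt (fun α : ℝ =>
        A i j * (ζ (Sum.inl i) + α * u (Sum.inl i)) * (ζ (Sum.inr j) + α * u (Sum.inr j)))
        (A i j * (u (Sum.inl i) * ζ (Sum.inr j) + ζ (Sum.inl i) * u (Sum.inr j))) 0 := by
    intro i j
    have h := (((haff (Sum.inl i)).const_mul (A i j)).mul (haff (Sum.inr j)))
    refine h.congr_deriv ?_
    ring
  have hsum1 : HasDerivAt (fun α : ℝ => ∑ i, ∑ j,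
      A i j * (ζ (Sum.inl i) + α * u (Sum.inl i)) * (ζ (Sum.inr j) + α * u (Sum.inr j)))
      (∑ i, ∑ j, A i j * (u (Sum.inl i) * ζ (Sum.inr j) + ζ (Sum.inl i) * u (Sum.inr j))) 0 :=
    HasDerivAt.fun_sum fun i _ => HasDerivAt.fun_sum fun j _ => hterm i j
  have hlog : ∀ a, HasDerivAt (fun α : ℝ => Real.log (ζ a + α * u a)) (-(w a)) 0 := by
    intro a
    have hne : ζ a + 0 * u a ≠ 0 := by simpa using (hζpos a).ne'
    have h := (Real.hasDerivAt_log hne).comp 0 (haff a)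
    refine h.congr_deriv ?_
    have hz := (hζpos a).ne'
    rw [hu a]
    field_simp
    ring
  have hsum2 : HasDerivAt (fun α : ℝ => ∑ a, Real.log (ζ a + α * u a)) (∑ a, -(w a)) 0 :=
    HasDerivAt.fun_sum fun a _ => hlog a
  have hD := hsum1.sub hsum2
  have hfun : (fun α : ℝ =>
        (∑ i, ∑ j, A i j * (ζ + α • u) (Sum.inl i) * (ζ + α • u) (Sum.inr j))
          - ∑ a, Real.log ((ζ + α • u) a))
      = fun α : ℝ => (∑ i, ∑ j,
          A i j * (ζ (Sum.inl i) + α * u (Sum.inl i)) * (ζ (Sum.inr j) + α * u (Sum.inr j)))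
          - ∑ a, Real.log (ζ a + α * u a) := by
    funext α
    simp [Pi.add_apply, Pi.smul_apply, smul_eq_mul, mul_comm]
  rw [hfun]
  refine hD.congr_deriv ?_
  -- final algebra
  have hbA : ∀ a, b a = (∑ c, A' a c) - 1 := by
    intro a
    rw [hb]
    simp [Matrix.mulVec, dotProduct, Matrix.sub_apply, Matrix.one_apply,
      Finset.sum_sub_distrib]
  have key : b ⬝ᵥ w
      = (∑ i, ∑ j, A i j * p i * q j * (w (Sum.inl i) + w (Sum.inr j))) - ∑ a, w a := by
    have h1 : b ⬝ᵥ w = (∑ a, ∑ c, A' a c * w a) - ∑ a, w a := by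
      simp only [dotProduct]
      rw [← Finset.sum_sub_distrib]
      refine Finset.sum_congr rfl fun a _ => ?_
      rw [hbA a, sub_mul, one_mul, Finset.sum_mul]
    rw [h1]
    congr 1
    have hrhs : ∑ i, ∑ j, A i j * p i * q j * (w (Sum.inl i) + w (Sum.inr j))
        = (∑ i, ∑ j, p i * A i j * q j * w (Sum.inl i))
          + ∑ j, ∑ i, q j * A i j * p i * w (Sum.inr j) := by
      rw [Finset.sum_comm (f := fun j i => q j * A i j * p i * w (Sum.inr j))]
      rw [← Finset.sum_add_distrib]
      refine Finset.sum_congr rfl fun i _ => ?_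
      rw [← Finset.sum_add_distrib]
      exact Finset.sum_congr rfl fun j _ => by ring
    rw [hrhs]
    rw [Fintype.sum_sum_type]
    congr 1
    · refine Finset.sum_congr rfl fun i _ => ?_
      rw [Fintype.sum_sum_type]
      simp [hA', hAtil, hζ]
    · refine Finset.sum_congr rfl fun j _ => ?_
      rw [Fintype.sum_sum_type]
      simp [hA', hAtil, hζ, mul_comm, mul_left_comm]
  rw [key]
  have hlhs : ∑ i, ∑ j, A i j * (u (Sum.inl i) * ζ (Sum.inr j) + ζ (Sum.inl i) * u (Sum.inr j))
      = -∑ i, ∑ j, A i j * p i * q j * (w (Sum.inl i) + w (Sum.inr j)) := by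
    rw [← Finset.sum_neg_distrib]
    refine Finset.sum_congr rfl fun i _ => ?_
    rw [← Finset.sum_neg_distrib]
    refine Finset.sum_congr rfl fun j _ => ?_
    rw [hu (Sum.inl i), hu (Sum.inr j), hζ]
    simp only [Sum.elim_inl, Sum.elim_inr]
    ring
  rw [hlhs, Finset.sum_neg_distrib]
  ring
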